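/- Finite-size union bound over pure-Z logical supports (quantitative core of Theorem 1): fix n, m ≥ 1 natural numbers and p ∈ ℝ with 0 ≤ p < 1/2. Let E be a random subset of Fin n in which each element is included independently with probability p, and let 𝓛 be a finite family of finite subsets of Fin n, each of cardinality at least m. Then the probability of the event { ∃ L ∈ 𝓛 with 2·|E ∩ L| ≥ |L| } is at most |𝓛| · exp(−2m(1/2 − p)²). -/

import Mathlib

open MeasureTheory

/-- The product over `Fin n` of the Bernoulli measure on `Bool` assigning
probability `p` to `true` (for `0 ≤ p ≤ 1`, where the clamping by `1` is inert). -/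
noncomputable def productBernoulli (n : ℕ) (p : ℝ) : Measure (Fin n → Bool) :=
  Measure.pi fun _ =>
    (PMF.bernoulli (min (Real.toNNReal p) 1) (min_le_right _ _)).toMeasure

/-- The random error subset of `Fin n` determined by a sample `ω : Fin n → Bool`. -/
def errSet {n : ℕ} (ω : Fin n → Bool) : Finset (Fin n) :=
  Finset.univ.filter fun i => ω i = true

open Finset Real

lemma pb_singleton (n : ℕ) (p : ℝ) (hp1 : p ≤ 1) (ω : Fin n → Bool) :
    productBernoulli n p {ω}
      = ∏ i, (if ω i then ENNReal.ofReal p else 1 - ENNReal.ofReal p) := by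
  rw [productBernoulli, show ({ω} : Set (Fin n → Bool)) = Set.univ.pi (fun i => {ω i}) by
    ext x; simp [funext_iff]]
  rw [Measure.pi_pi]
  congr 1
  ext i
  rw [PMF.toMeasure_apply_singleton _ _ (measurableSet_singleton _)]
  have : min (Real.toNNReal p) 1 = Real.toNNReal p := by
    simp [Real.toNNReal_le_one, hp1]
  rw [PMF.bernoulli_apply]
  cases h : ω i <;> simp [this, ENNReal.ofReal, ENNReal.coe_sub]

lemma measure_eq_sum' {α : Type*} [Fintype α] [MeasurableSpace α] [MeasurableSingletonClass α]
    (μ : Measure α) (S : Set α) [DecidablePred (· ∈ S)] :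
    μ S = ∑ ω ∈ Finset.univ.filter (· ∈ S), μ {ω} := by
  conv_lhs => rw [show S = ⋃ ω ∈ Finset.univ.filter (· ∈ S), {ω} by ext x; simp]
  rw [measure_biUnion_finset]
  · intro a _ b _ hab
    simp [Function.onFun, Set.disjoint_singleton, hab]
  · intro ω _
    exact measurableSet_singleton ω

set_option maxHeartbeats 1000000 in
lemma perL (n : ℕ) (p : ℝ) (hp0 : 0 ≤ p) (hp : p < 1/2) (L : Finset (Fin n)) :
    productBernoulli n p {ω | L.card ≤ 2 * (errSet ω ∩ L).card}
      ≤ 2^L.card * (ENNReal.ofReal p)^(L.card - L.card/2)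
          * (1 - ENNReal.ofReal p)^(L.card/2) := by
  classical
  set r := ENNReal.ofReal p with hr
  set k := L.card with hk
  set w : Bool → ENNReal := fun b => if b then r else 1 - r with hw
  have hp1 : p ≤ 1 := by linarith
  have hr1 : r ≤ 1 := ENNReal.ofReal_le_one.2 hp1
  have hsub : (1:ENNReal) - r = ENNReal.ofReal (1 - p) := by
    rw [ENNReal.ofReal_sub _ hp0, ENNReal.ofReal_one]
  have hrw : r ≤ 1 - r := by
    rw [hsub]
    exact ENNReal.ofReal_le_ofReal (by linarith)
  set C : ENNReal := r^(k - k/2) * (1 - r)^(k/2) with hC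
  -- per-omega bound on the L-part of the product
  have keyω : ∀ ω : Fin n → Bool, k ≤ 2 * (errSet ω ∩ L).card →
      ∏ i ∈ L, w (ω i) ≤ C := by
    intro ω hω
    have hEL : errSet ω ∩ L = L.filter (fun i => ω i = true) := by
      ext i; simp [errSet, and_comm]
    set j := (L.filter (fun i => ω i = true)).card with hj
    have hjk : j ≤ k := card_filter_le _ _
    have hj2 : k ≤ 2 * j := by rwa [hEL] at hω
    have hsplit : ∏ i ∈ L, w (ω i)
        = r^j * (1 - r)^(k - j) := by
      rw [← Finset.prod_filter_mul_prod_filter_not L (fun i => ω i = true)]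
      congr 1
      · rw [Finset.prod_congr rfl (fun i hi => ?_), Finset.prod_const, ← hj]
        simp only [Finset.mem_filter] at hi
        simp [hw, hi.2]
      · rw [Finset.prod_congr rfl (fun i hi => ?_), Finset.prod_const]
        · congr 1
          have := Finset.card_filter_add_card_filter_not
            (s := L) (p := fun i => ω i = true)
          omega
        · simp only [Finset.mem_filter] at hi
          simp [hw, hi.2]
    rw [hsplit, hC]
    have hd : j = (k - k/2) + (j - (k - k/2)) := by omega
    have hd2 : (k - j) + (j - (k - k/2)) = k/2 := by omega
    calc r^j * (1-r)^(k-j)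
        = (r^(k - k/2) * (1-r)^(k-j)) * r^(j - (k - k/2)) := by
          rw [mul_right_comm, ← pow_add, ← hd]
      _ ≤ (r^(k - k/2) * (1-r)^(k-j)) * (1-r)^(j - (k - k/2)) := by
          gcongr
      _ = r^(k - k/2) * (1-r)^(k/2) := by rw [mul_assoc, ← pow_add, hd2]
  -- measure as a finite sum
  rw [measure_eq_sum']
  have hstep : ∀ ω ∈ Finset.univ.filter
      (· ∈ {ω : Fin n → Bool | k ≤ 2 * (errSet ω ∩ L).card}),
      productBernoulli n p {ω} ≤ C * ∏ i ∈ Lᶜ, w (ω i) := by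
    intro ω hω
    simp only [Finset.mem_filter, Set.mem_setOf_eq] at hω
    rw [pb_singleton n p hp1 ω]
    calc ∏ i, (if ω i then r else 1 - r)
        = (∏ i ∈ L, w (ω i)) * ∏ i ∈ Lᶜ, w (ω i) :=
          (Finset.prod_mul_prod_compl L _).symm
      _ ≤ C * ∏ i ∈ Lᶜ, w (ω i) := by
          gcongr
          exact keyω ω hω.2
  calc ∑ ω ∈ Finset.univ.filter (· ∈ {ω : Fin n → Bool | k ≤ 2 * (errSet ω ∩ L).card}),
        productBernoulli n p {ω}
      ≤ ∑ ω ∈ Finset.univ.filter (· ∈ {ω : Fin n → Bool | k ≤ 2 * (errSet ω ∩ L).card}),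
        C * ∏ i ∈ Lᶜ, w (ω i) := Finset.sum_le_sum hstep
    _ ≤ ∑ ω : Fin n → Bool, C * ∏ i ∈ Lᶜ, w (ω i) :=
        Finset.sum_le_sum_of_subset (Finset.filter_subset _ _)
    _ = C * ∑ ω : Fin n → Bool, ∏ i ∈ Lᶜ, w (ω i) := by rw [Finset.mul_sum]
    _ = C * 2^k := by
        congr 1
        have hg : ∀ ω : Fin n → Bool, ∏ i ∈ Lᶜ, w (ω i)
            = ∏ i, (if i ∈ L then 1 else w (ω i)) := by
          intro ω
          rw [← Finset.prod_mul_prod_compl L (fun i => if i ∈ L then 1 else w (ω i))]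
          rw [Finset.prod_congr rfl (fun i hi => if_pos hi), Finset.prod_const_one, one_mul]
          exact Finset.prod_congr rfl (fun i hi => (if_neg (Finset.mem_compl.1 hi)).symm)
        calc ∑ ω : Fin n → Bool, ∏ i ∈ Lᶜ, w (ω i)
            = ∑ ω : Fin n → Bool, ∏ i, (if i ∈ L then 1 else w (ω i)) :=
              Finset.sum_congr rfl (fun ω _ => hg ω)
          _ = ∑ ω ∈ Fintype.piFinset (fun _ : Fin n => (Finset.univ : Finset Bool)),
                ∏ i, (if i ∈ L then 1 else w (ω i)) := by rw [Fintype.piFinset_univ]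
          _ = ∏ i, ∑ b : Bool, (if i ∈ L then 1 else w b) :=
              (Finset.prod_univ_sum (fun _ => Finset.univ)
                (fun i b => if i ∈ L then 1 else w b)).symm
          _ = ∏ i, (if i ∈ L then (2:ENNReal) else 1) := by
              refine Finset.prod_congr rfl (fun i _ => ?_)
              by_cases hi : i ∈ L
              · simp only [if_pos hi, Fintype.sum_bool]
                norm_num
              · simp only [if_neg hi, Fintype.sum_bool, hw]
                simp only [if_pos, if_neg Bool.false_ne_true]
                exact add_tsub_cancel_of_le hr1
          _ = 2^k := by
              rw [Finset.prod_ite_mem, Finset.univ_inter, Finset.prod_const, hk]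
    _ = 2^k * r^(k - k/2) * (1 - r)^(k/2) := by rw [hC]; ring

lemma real_core (m k : ℕ) (hm : 1 ≤ m) (hmk : m ≤ k) (p : ℝ) (hp0 : 0 ≤ p) (hp : p < 1/2) :
    2^k * p^(k - k/2) * (1-p)^(k/2) ≤ Real.exp (-2 * m * (1 / 2 - p) ^ 2) := by
  have hq0 : (0:ℝ) ≤ 1 - p := by linarith
  have hpq : p ≤ 1 - p := by linarith
  set a : ℝ := 2^k * p^(k - k/2) * (1-p)^(k/2) with ha
  have ha0 : 0 ≤ a := by positivity
  have hb0 : (0:ℝ) < Real.exp (-2 * m * (1 / 2 - p) ^ 2) := Real.exp_pos _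
  have hk1 : 1 ≤ k := hm.trans hmk
  set x : ℝ := (1/2 - p)^2 with hx
  have hx0 : 0 ≤ x := sq_nonneg _
  have key : a^2 ≤ Real.exp (-2 * m * x)^2 := by
    have hc : (k - k/2) * 2 = (k - k % 2) + (k % 2) * 2 := by omega
    have hf : (k/2) * 2 = k - k % 2 := by omega
    have h4 : (2:ℝ)^(k*2) = 4^k := by rw [mul_comm, pow_mul]; norm_num
    have e1 : a^2 = 4^k * (p^(k % 2 * 2) * (p^(k - k % 2) * (1-p)^(k - k % 2))) := by
      rw [ha, mul_pow, mul_pow, ← pow_mul, ← pow_mul, ← pow_mul, hc, hf, pow_add, h4]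
      ring
    have h2 : p^(k % 2 * 2) ≤ (p*(1-p))^(k % 2) := by
      rw [mul_comm (k % 2) 2, pow_mul]
      exact pow_le_pow_left₀ (by positivity)
        (by nlinarith [mul_nonneg hp0 (by linarith : (0:ℝ) ≤ 1 - 2*p)]) _
    have e2 : p^(k % 2 * 2) * (p^(k - k % 2) * (1-p)^(k - k % 2))
        ≤ (p*(1-p))^(k % 2) * (p*(1-p))^(k - k % 2) := by
      rw [← mul_pow]
      exact mul_le_mul_of_nonneg_right h2 (by positivity)
    have e3 : (p*(1-p))^(k % 2) * (p*(1-p))^(k - k % 2) = (p*(1-p))^k := by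
      rw [← pow_add]; congr 1; omega
    have e5 : (4*(p*(1-p)))^k ≤ Real.exp (-(4*x))^k := by
      apply pow_le_pow_left₀ (by nlinarith [mul_nonneg hp0 hq0])
      have h41 : 4*(p*(1-p)) = 1 - 4*x := by rw [hx]; ring
      nlinarith [Real.add_one_le_exp (-(4*x))]
    have e6 : Real.exp (-(4*x))^k ≤ Real.exp (-2 * m * x)^2 := by
      rw [← Real.exp_nat_mul, ← Real.exp_nat_mul]
      apply Real.exp_le_exp.2
      have hmk' : (m:ℝ) ≤ k := by exact_mod_cast hmk
      push_cast
      nlinarith [mul_nonneg (sub_nonneg.2 hmk') hx0]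
    calc a^2 = 4^k * (p^(k % 2 * 2) * (p^(k - k % 2) * (1-p)^(k - k % 2))) := e1
      _ ≤ 4^k * ((p*(1-p))^(k % 2) * (p*(1-p))^(k - k % 2)) :=
          mul_le_mul_of_nonneg_left e2 (by positivity)
      _ = (4*(p*(1-p)))^k := by rw [e3]; exact (mul_pow 4 (p*(1-p)) k).symm
      _ ≤ Real.exp (-(4*x))^k := e5
      _ ≤ _ := e6
  calc a = Real.sqrt (a^2) := (Real.sqrt_sq ha0).symm
    _ ≤ Real.sqrt (Real.exp (-2 * m * x)^2) := Real.sqrt_le_sqrt key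
    _ = _ := Real.sqrt_sq hb0.le

theorem union_bound_pure_Z_logicals (n m : ℕ) (hn : 1 ≤ n) (hm : 1 ≤ m)
    (p : ℝ) (hp0 : 0 ≤ p) (hp : p < 1 / 2)
    (𝓛 : Finset (Finset (Fin n))) (hcard : ∀ L ∈ 𝓛, m ≤ L.card) :
    productBernoulli n p {ω | ∃ L ∈ 𝓛, L.card ≤ 2 * (errSet ω ∩ L).card}
      ≤ ENNReal.ofReal ((𝓛.card : ℝ) * Real.exp (-2 * m * (1 / 2 - p) ^ 2)) := by
  classical
  have hq0 : (0:ℝ) ≤ 1 - p := by linarith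
  set b : ℝ := Real.exp (-2 * m * (1 / 2 - p) ^ 2) with hb
  have hLbound : ∀ L ∈ 𝓛,
      productBernoulli n p {ω | L.card ≤ 2 * (errSet ω ∩ L).card} ≤ ENNReal.ofReal b := by
    intro L hL
    refine (perL n p hp0 hp L).trans ?_
    have e : (2:ENNReal)^L.card * (ENNReal.ofReal p)^(L.card - L.card/2)
        * (1 - ENNReal.ofReal p)^(L.card/2)
        = ENNReal.ofReal (2^L.card * p^(L.card - L.card/2) * (1-p)^(L.card/2)) := by
      rw [ENNReal.ofReal_mul (by positivity), ENNReal.ofReal_mul (by positivity),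
        ENNReal.ofReal_pow (by norm_num : (0:ℝ) ≤ 2), ENNReal.ofReal_pow hp0,
        ENNReal.ofReal_pow hq0, ENNReal.ofReal_ofNat,
        ENNReal.ofReal_sub _ hp0, ENNReal.ofReal_one]
    rw [e]
    exact ENNReal.ofReal_le_ofReal (real_core m L.card hm (hcard L hL) p hp0 hp)
  have hU : {ω : Fin n → Bool | ∃ L ∈ 𝓛, L.card ≤ 2 * (errSet ω ∩ L).card}
      = ⋃ L ∈ 𝓛, {ω | L.card ≤ 2 * (errSet ω ∩ L).card} := by
    ext ω; simp
  rw [hU]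
  calc productBernoulli n p (⋃ L ∈ 𝓛, {ω | L.card ≤ 2 * (errSet ω ∩ L).card})
      ≤ ∑ L ∈ 𝓛, productBernoulli n p {ω | L.card ≤ 2 * (errSet ω ∩ L).card} :=
        measure_biUnion_finset_le _ _
    _ ≤ ∑ _L ∈ 𝓛, ENNReal.ofReal b := Finset.sum_le_sum hLbound
    _ = 𝓛.card * ENNReal.ofReal b := by rw [Finset.sum_const, nsmul_eq_mul]
    _ = ENNReal.ofReal ((𝓛.card : ℝ) * b) := by
        rw [ENNReal.ofReal_mul (by positivity), ENNReal.ofReal_natCast]
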